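/- If ω1, ω3, ω5, ω7 solve the symmetric (δ = 1) center-manifold system and ω3(t) ≠ 0 for all t ≥ 0, then the ratio R(t) = |ω1(t)|²/|ω3(t)|² is differentiable and satisfies R'(t) = (1 + R(t)) (Re P(t) − Re Q(t)), where P(t) = ω1(t) conj(ω3(t)) conj(ω7(t)) / |ω3(t)|² and Q(t) = conj(ω1(t)) conj(ω3(t)) ω5(t) / |ω3(t)|². -/

import Mathlib

theorem absSq_hasDerivAt {f : ℝ → ℂ} {d : ℂ} {t : ℝ} (hf : HasDerivAt f d t) :
    HasDerivAt (fun s => ‖f s‖ ^ 2) (2 * (d * (starRingEnd ℂ) (f t)).re) t := by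
  have hre : HasDerivAt (fun s => (f s).re) d.re t :=
    Complex.reCLM.hasFDerivAt.comp_hasDerivAt t hf
  have him : HasDerivAt (fun s => (f s).im) d.im t :=
    Complex.imCLM.hasFDerivAt.comp_hasDerivAt t hf
  have H := (hre.mul hre).add (him.mul him)
  have heq : (fun s => ‖f s‖ ^ 2)
      = fun s => (f s).re * (f s).re + (f s).im * (f s).im := by
    funext s; rw [← Complex.normSq_apply, Complex.sq_norm]
  rw [heq]
  refine H.congr_deriv ?_
  simp [Complex.mul_re, Complex.conj_re, Complex.conj_im]
  ring

/-- For the symmetric (δ = 1) center-manifold system with ω3(t) ≠ 0 for all t ≥ 0,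
the ratio R(t) = |ω1(t)|²/|ω3(t)|² is differentiable and satisfies
R' = (1 + R)(Re P − Re Q), where P = ω1 conj(ω3) conj(ω7)/|ω3|² and
Q = conj(ω1) conj(ω3) ω5/|ω3|². -/
theorem ratio_evolution
    (ν : ℝ) (hν : 0 < ν)
    (ω1 ω3 ω5 ω7 : ℝ → ℂ)
    (h1 : ∀ t : ℝ, 0 ≤ t → HasDerivAt ω1
      (-(ν : ℂ) * ω1 t + (1 / 2 : ℂ) * (ω3 t * ω7 t - (starRingEnd ℂ) (ω3 t) * ω5 t)
        + ((3 / (40 * ν) : ℝ) : ℂ) * ω1 t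
            * ((‖ω5 t‖ ^ 2 + ‖ω7 t‖ ^ 2 : ℝ) : ℂ)) t)
    (h3 : ∀ t : ℝ, 0 ≤ t → HasDerivAt ω3
      (-(ν : ℂ) * ω3 t + (1 / 2 : ℂ) * ((starRingEnd ℂ) (ω1 t) * ω5 t - ω1 t * (starRingEnd ℂ) (ω7 t))
        + ((3 / (40 * ν) : ℝ) : ℂ) * ω3 t
            * ((‖ω5 t‖ ^ 2 + ‖ω7 t‖ ^ 2 : ℝ) : ℂ)) t)
    (h5 : ∀ t : ℝ, 0 ≤ t → HasDerivAt ω5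
      (-((2 * ν : ℝ) : ℂ) * ω5 t - ((1 / (5 * ν) : ℝ) : ℂ) * ω5 t
          * ((‖ω1 t‖ ^ 2 + ‖ω3 t‖ ^ 2 : ℝ) : ℂ)) t)
    (h7 : ∀ t : ℝ, 0 ≤ t → HasDerivAt ω7
      (-((2 * ν : ℝ) : ℂ) * ω7 t - ((1 / (5 * ν) : ℝ) : ℂ) * ω7 t
          * ((‖ω1 t‖ ^ 2 + ‖ω3 t‖ ^ 2 : ℝ) : ℂ)) t)
    (h3ne : ∀ t : ℝ, 0 ≤ t → ω3 t ≠ 0) :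
    ∀ t : ℝ, 0 ≤ t →
      HasDerivAt (fun s => ‖ω1 s‖ ^ 2 / ‖ω3 s‖ ^ 2)
        ((1 + ‖ω1 t‖ ^ 2 / ‖ω3 t‖ ^ 2)
          * ((ω1 t * (starRingEnd ℂ) (ω3 t) * (starRingEnd ℂ) (ω7 t)
                / ((‖ω3 t‖ ^ 2 : ℝ) : ℂ)).re
             - ((starRingEnd ℂ) (ω1 t) * (starRingEnd ℂ) (ω3 t) * ω5 t
                / ((‖ω3 t‖ ^ 2 : ℝ) : ℂ)).re)) t := by
  intro t ht
  have hz3 : ω3 t ≠ 0 := h3ne t ht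
  have hb : ‖ω3 t‖ ^ 2 ≠ 0 :=
    pow_ne_zero _ (norm_ne_zero_iff.mpr hz3)
  have hb2 : (ω3 t).re * (ω3 t).re + (ω3 t).im * (ω3 t).im ≠ 0 := by
    simpa [Complex.normSq_apply] using (Complex.normSq_pos.mpr hz3).ne'
  have H := (absSq_hasDerivAt (h1 t ht)).div (absSq_hasDerivAt (h3 t ht)) hb
  refine H.congr_deriv ?_
  have h12 : (1 / 2 : ℂ) = ((1 / 2 : ℝ) : ℂ) := by norm_num
  rw [h12]
  simp only [Complex.div_ofReal_re, Complex.sq_norm, Complex.normSq_apply,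
    Complex.add_re, Complex.add_im, Complex.sub_re, Complex.sub_im,
    Complex.mul_re, Complex.mul_im, Complex.neg_re, Complex.neg_im,
    Complex.conj_re, Complex.conj_im, Complex.ofReal_re, Complex.ofReal_im]
  have hb3 : (ω3 t).re ^ 2 + (ω3 t).im ^ 2 ≠ 0 := by rw [sq, sq]; exact hb2
  field_simp
  ring
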